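/- Let K be a field of characteristic zero and let P : K^n → K be a bisymmetric polynomial function of degree p ≥ 2 whose homogeneous component of degree p is the monomial P_p(x) = c·x^γ with c ≠ 0 and |γ| = p. Suppose P ≠ P_p, let q < p be the degree of P − P_p and let P_q be the homogeneous component of degree q of P. Then for all x ∈ K^n, c·p·P_q(x)·∏_{j=1}^n x_j^{p−q} = P_q(1,…,1)·P_p(x)·Σ_{j=1}^n γ_j·∏_{i ≠ j} x_i^{p−q} (this is the identity P_q(x) = (P_q(1,…,1)/(c·p))·P_p(x)·Σ_{j=1}^n γ_j/x_j^{p−q} after clearing denominators). -/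

import Mathlib

open Polynomial Finset


/-- A function `f : S^n → S` is bisymmetric if for every `n × n` matrix `X` over `S`,
applying `f` to the rows and then to the results equals applying `f` to the columns
and then to the results. -/
def Bisym {S : Type*} {n : ℕ} (f : (Fin n → S) → S) : Prop :=
  ∀ X : Fin n → Fin n → S,
    f (fun i => f (X i)) = f (fun j => f (fun i => X i j))

namespace BisymProof

variable {K : Type*} [Field K]

/-- `B` has the form `μ·X^(p·k) + w` with `w` of degree at most `p(k-1)+q` and
coefficient `σ` at `p(k-1)+q`; for `k = 0`, `w = 0`. -/
def Good (p q k : ℕ) (μ σ : K) (B : K[X]) : Prop :=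
  ∃ w : K[X], B = Polynomial.C μ * Polynomial.X ^ (p * k) + w ∧
    w.natDegree ≤ p * (k - 1) + q ∧ w.coeff (p * (k - 1) + q) = σ ∧ (k = 0 → w = 0)

lemma good_one (p q : ℕ) : Good p q 0 (1 : K) 0 1 :=
  ⟨0, by simp, by simp, by simp, fun _ => rfl⟩

lemma Good.natDegree_le {p q k : ℕ} {μ σ : K} {B : K[X]} (hq : q ≤ p)
    (h : Good p q k μ σ B) : B.natDegree ≤ p * k := by
  obtain ⟨w, rfl, hd, -, hz⟩ := h
  refine (natDegree_add_le _ _).trans (max_le (natDegree_C_mul_X_pow_le _ _) ?_)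
  rcases Nat.eq_zero_or_pos k with rfl | hk
  · simp [hz rfl]
  · obtain ⟨k, rfl⟩ := Nat.exists_eq_add_of_lt hk
    simp only [Nat.zero_add] at *
    refine hd.trans ?_
    have : p * (k + 1 - 1) + q = p * k + q := by simp
    rw [this, Nat.mul_succ]
    omega

lemma Good.mul {p q k l : ℕ} {μ ν σ τ : K} {B1 B2 : K[X]} (hq : q < p)
    (h1 : Good p q k μ σ B1) (h2 : Good p q l ν τ B2) :
    Good p q (k + l) (μ * ν) (μ * τ + ν * σ) (B1 * B2) := by
  obtain ⟨w1, rfl, hd1, hc1, hz1⟩ := h1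
  obtain ⟨w2, rfl, hd2, hc2, hz2⟩ := h2
  refine ⟨Polynomial.C μ * Polynomial.X ^ (p * k) * w2
      + Polynomial.C ν * Polynomial.X ^ (p * l) * w1 + w1 * w2, by
    rw [Nat.mul_add, pow_add, Polynomial.C_mul]; ring, ?_, ?_, ?_⟩
  · -- degree bound
    rcases Nat.eq_zero_or_pos k with rfl | hk
    · have hw1 : w1 = 0 := hz1 rfl
      subst hw1
      simp only [mul_zero, zero_mul, add_zero, Nat.zero_add]
      refine (natDegree_mul_le).trans ?_
      have := natDegree_C_mul_X_pow_le μ (p * 0)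
      simp only [Nat.mul_zero] at this ⊢
      omega
    rcases Nat.eq_zero_or_pos l with rfl | hl
    · have hw2 : w2 = 0 := hz2 rfl
      subst hw2
      simp only [mul_zero, zero_mul, add_zero, zero_add, Nat.add_zero]
      refine (natDegree_mul_le).trans ?_
      have := natDegree_C_mul_X_pow_le ν (p * 0)
      simp only [Nat.mul_zero] at this ⊢
      omega
    obtain ⟨k, rfl⟩ := Nat.exists_eq_add_of_lt hk
    obtain ⟨l, rfl⟩ := Nat.exists_eq_add_of_lt hl
    simp only [Nat.zero_add, Nat.add_sub_cancel] at *
    have e1 : (k + 1) + (l + 1) - 1 = k + l + 1 := by omega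
    rw [e1]
    refine (natDegree_add_le _ _).trans (max_le ((natDegree_add_le _ _).trans (max_le ?_ ?_)) ?_)
    · refine (natDegree_mul_le).trans ?_
      have h3 := natDegree_C_mul_X_pow_le μ (p * (k+1))
      have : p * (k + l + 1) = p * (k + 1) + p * l := by ring
      omega
    · refine (natDegree_mul_le).trans ?_
      have h3 := natDegree_C_mul_X_pow_le ν (p * (l+1))
      have : p * (k + l + 1) = p * (l + 1) + p * k := by ring
      omega
    · refine (natDegree_mul_le).trans ?_
      have : p * (k + l + 1) = p * k + p * l + p := by ring
      omega
  · -- coefficient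
    rcases Nat.eq_zero_or_pos k with rfl | hk
    · have hw1 : w1 = 0 := hz1 rfl
      have hσ : σ = 0 := by simpa [hw1] using hc1.symm
      subst hw1
      simp only [mul_zero, zero_mul, add_zero, Nat.zero_add, Nat.mul_zero, pow_zero, mul_one,
        hσ, mul_zero]
      rw [coeff_C_mul, hc2]
    rcases Nat.eq_zero_or_pos l with rfl | hl
    · have hw2 : w2 = 0 := hz2 rfl
      have hτ : τ = 0 := by simpa [hw2] using hc2.symm
      subst hw2
      simp only [mul_zero, zero_mul, add_zero, zero_add, Nat.add_zero, Nat.mul_zero, pow_zero,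
        mul_one, hτ]
      rw [coeff_C_mul, hc1]
    obtain ⟨k, rfl⟩ := Nat.exists_eq_add_of_lt hk
    obtain ⟨l, rfl⟩ := Nat.exists_eq_add_of_lt hl
    simp only [Nat.zero_add, Nat.add_sub_cancel] at *
    have e1 : (k + 1) + (l + 1) - 1 = k + l + 1 := by omega
    rw [e1, coeff_add, coeff_add]
    have e2 : p * (k + l + 1) + q = (p * l + q) + p * (k + 1) := by ring
    have e3 : p * (k + l + 1) + q = (p * k + q) + p * (l + 1) := by ring
    have c1 : (Polynomial.C μ * Polynomial.X ^ (p * (k+1)) * w2).coeff (p * (k + l + 1) + q)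
        = μ * τ := by
      rw [mul_assoc, coeff_C_mul, e2, mul_comm (Polynomial.X ^ (p * (k+1))) w2,
        coeff_mul_X_pow, hc2]
    have c2 : (Polynomial.C ν * Polynomial.X ^ (p * (l+1)) * w1).coeff (p * (k + l + 1) + q)
        = ν * σ := by
      rw [mul_assoc, coeff_C_mul, e3, mul_comm (Polynomial.X ^ (p * (l+1))) w1,
        coeff_mul_X_pow, hc1]
    have c3 : (w1 * w2).coeff (p * (k + l + 1) + q) = 0 := by
      apply coeff_eq_zero_of_natDegree_lt
      refine (natDegree_mul_le).trans_lt ?_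
      have : p * (k + l + 1) = p * k + p * l + p := by ring
      omega
    rw [c1, c2, c3, add_zero]
  · intro h
    have hk := hz1 (by omega)
    have hl := hz2 (by omega)
    simp [hk, hl]

lemma Good.pow {p q : ℕ} {μ σ : K} {B : K[X]} (hq : q < p)
    (h : Good p q 1 μ σ B) : ∀ e : ℕ, Good p q e (μ ^ e) ((e : K) * μ ^ (e - 1) * σ) (B ^ e) := by
  intro e
  induction e with
  | zero => simpa using good_one p q
  | succ e ih =>
    have := Good.mul hq h ih
    rw [pow_succ, pow_succ]
    have harr : μ * ((e : K) * μ ^ (e - 1) * σ) + μ ^ e * σ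
        = ((e + 1 : ℕ) : K) * μ ^ (e + 1 - 1) * σ := by
      rcases Nat.eq_zero_or_pos e with rfl | he
      · simp
      · obtain ⟨e, rfl⟩ := Nat.exists_eq_add_of_lt he
        simp only [Nat.zero_add, Nat.add_sub_cancel]
        push_cast
        rw [pow_succ]
        ring
    rw [mul_comm (B ^ e) B, mul_comm (μ ^ e) μ, ← harr]
    have key := Good.mul hq h ih
    rwa [Nat.add_comm 1 e] at key

lemma Good.prod {ι : Type*} [DecidableEq ι] {p q : ℕ} (hq : q < p)
    {s : Finset ι} {e : ι → ℕ} {μ σ : ι → K} {B : ι → K[X]}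
    (h : ∀ j ∈ s, Good p q (e j) (μ j) (σ j) (B j)) :
    Good p q (∑ j ∈ s, e j) (∏ j ∈ s, μ j)
      (∑ j ∈ s, σ j * ∏ i ∈ s.erase j, μ i) (∏ j ∈ s, B j) := by
  induction s using Finset.induction with
  | empty => simpa using good_one p q
  | @insert a s ha ih =>
    rw [Finset.sum_insert ha, Finset.prod_insert ha, Finset.prod_insert ha, Finset.sum_insert ha]
    have key := Good.mul hq (h a (Finset.mem_insert_self a s))
      (ih fun j hj => h j (Finset.mem_insert_of_mem hj))
    have harr : μ a * (∑ j ∈ s, σ j * ∏ i ∈ s.erase j, μ i) + (∏ j ∈ s, μ j) * σ a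
        = σ a * ∏ i ∈ (insert a s).erase a, μ i
          + ∑ j ∈ s, σ j * ∏ i ∈ (insert a s).erase j, μ i := by
      rw [Finset.erase_insert ha, Finset.mul_sum]
      have : ∀ j ∈ s, μ a * (σ j * ∏ i ∈ s.erase j, μ i)
          = σ j * ∏ i ∈ (insert a s).erase j, μ i := by
        intro j hj
        have hne : a ≠ j := fun hh => ha (hh ▸ hj)
        rw [Finset.erase_insert_of_ne hne]
        have haj : a ∉ s.erase j := fun hh => ha (Finset.mem_of_mem_erase hh)
        rw [Finset.prod_insert haj]
        ring
      rw [Finset.sum_congr rfl this]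
      ring
    rw [← harr]
    exact key

lemma Good.coeff_eq {p q k : ℕ} {μ σ : K} {B : K[X]} (hq : q < p) (hk : 1 ≤ k)
    (h : Good p q k μ σ B) : B.coeff (p * (k - 1) + q) = σ := by
  obtain ⟨w, rfl, hd, hc, -⟩ := h
  rw [coeff_add, hc, coeff_C_mul, coeff_X_pow, if_neg, mul_zero, zero_add]
  obtain ⟨k, rfl⟩ := Nat.exists_eq_add_of_lt hk
  simp only [Nat.zero_add, Nat.add_sub_cancel]
  have : p * (k + 1) = p * k + p := by ring
  omega


lemma eval_homog_mul_left {n k : ℕ} {f : MvPolynomial (Fin n) K} (hf : f.IsHomogeneous k)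
    (t : K) (y : Fin n → K) :
    MvPolynomial.eval (fun i => t * y i) f = t ^ k * MvPolynomial.eval y f := by
  rw [MvPolynomial.eval_eq', MvPolynomial.eval_eq', Finset.mul_sum]
  refine Finset.sum_congr rfl fun d hd => ?_
  have h1 : d.degree = k := by
    rw [Finsupp.degree_eq_weight_one]
    exact hf (MvPolynomial.mem_support_iff.mp hd)
  have h2 : ∑ i, d i = k := by
    rw [← h1, Finsupp.degree]
    exact (Finset.sum_subset (Finset.subset_univ _)
      fun i _ hi => Finsupp.notMem_support_iff.mp hi).symm
  calc MvPolynomial.coeff d f * ∏ i, (t * y i) ^ d i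
      = MvPolynomial.coeff d f * ((∏ i, t ^ d i) * ∏ i, y i ^ d i) := by
        rw [← Finset.prod_mul_distrib]; simp [mul_pow]
    _ = t ^ k * (MvPolynomial.coeff d f * ∏ i, y i ^ d i) := by
        rw [Finset.prod_pow_eq_pow_sum, h2]; ring

lemma natDegree_aeval_le {n : ℕ} (w : Fin n → K[X]) (d : ℕ) (hw : ∀ j, (w j).natDegree ≤ d)
    (f : MvPolynomial (Fin n) K) :
    (MvPolynomial.aeval w f).natDegree ≤ f.totalDegree * d := by
  conv_lhs => rw [f.as_sum]
  rw [map_sum]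
  refine natDegree_sum_le_of_forall_le _ _ fun v hv => ?_
  rw [MvPolynomial.aeval_monomial]
  refine (natDegree_mul_le).trans ?_
  have h0 : (algebraMap K K[X] (MvPolynomial.coeff v f)).natDegree = 0 := by
    rw [Polynomial.algebraMap_eq]; exact natDegree_C _
  rw [h0, Nat.zero_add]
  rw [Finsupp.prod_pow]
  refine (natDegree_prod_le _ _).trans ?_
  have hstep : ∀ i ∈ Finset.univ, (w i ^ v i).natDegree ≤ v i * d := fun i _ =>
    (natDegree_pow_le).trans (Nat.mul_le_mul_left _ (hw i))
  refine (Finset.sum_le_sum hstep).trans ?_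
  rw [← Finset.sum_mul]
  refine Nat.mul_le_mul_right _ ?_
  have h2 : (v.sum fun _ e => e) = ∑ i, v i := Finsupp.sum_fintype _ _ fun _ => rfl
  rw [← h2]
  exact MvPolynomial.le_totalDegree hv

lemma eval_aeval_poly {n : ℕ} (w : Fin n → K[X]) (t : K) (f : MvPolynomial (Fin n) K) :
    (MvPolynomial.aeval w f).eval t = MvPolynomial.eval (fun j => (w j).eval t) f := by
  have hcomp : (Polynomial.evalRingHom t).comp (algebraMap K K[X]) = RingHom.id K := by
    ext r; simp
  rw [MvPolynomial.aeval_def, ← Polynomial.coe_evalRingHom,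
    MvPolynomial.eval₂_comp_left, hcomp]
  rfl

lemma eval_eq_of_eval_nonzero_eq {n : ℕ} [Infinite K] {A B : MvPolynomial (Fin n) K}
    (h : ∀ y : Fin n → K, (∀ i, y i ≠ 0) → MvPolynomial.eval y A = MvPolynomial.eval y B)
    (x : Fin n → K) : MvPolynomial.eval x A = MvPolynomial.eval x B := by
  have key : A * ∏ i, MvPolynomial.X i = B * ∏ i, MvPolynomial.X i := by
    apply MvPolynomial.funext
    intro y
    by_cases hy : ∀ i, y i ≠ 0
    · rw [map_mul, map_mul, h y hy]
    · push_neg at hy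
      obtain ⟨i, hi⟩ := hy
      have hz : MvPolynomial.eval y (∏ i, (MvPolynomial.X i : MvPolynomial (Fin n) K)) = 0 := by
        rw [map_prod]
        exact Finset.prod_eq_zero (Finset.mem_univ i) (by simp [hi])
      rw [map_mul, map_mul, hz, mul_zero, mul_zero]
  have hX : (∏ i, (MvPolynomial.X i : MvPolynomial (Fin n) K)) ≠ 0 :=
    Finset.prod_ne_zero_iff.mpr fun i _ => MvPolynomial.X_ne_zero i
  rw [mul_right_cancel₀ hX key]



lemma qp_lt {p q : ℕ} (hp : 2 ≤ p) (hqp : q < p) : q * p < p * (p - 1) + q := by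
  have h1 : q * p = q * (p - 1) + q := by
    conv_lhs => rw [show p = (p - 1) + 1 by omega]
    rw [Nat.mul_add, Nat.mul_one]
  have h2 : q * (p - 1) < p * (p - 1) :=
    Nat.mul_lt_mul_of_lt_of_le hqp (le_refl _) (by omega)
  omega

lemma keyD {n p q : ℕ} [Infinite K] (P : MvPolynomial (Fin n) K)
    (hbi : Bisym fun x : Fin n → K => MvPolynomial.eval x P)
    (hdeg : P.totalDegree = p) (hp : 2 ≤ p)
    (c : K) (hc : c ≠ 0) (γ : Fin n →₀ ℕ) (hγ : ∑ i, γ i = p)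
    (hPp : MvPolynomial.homogeneousComponent p P = MvPolynomial.monomial γ c)
    (hq : (P - MvPolynomial.homogeneousComponent p P).totalDegree = q) (hqp : q < p)
    (y : Fin n → K) :
    (p : K) * (MvPolynomial.eval y (MvPolynomial.homogeneousComponent p P)) ^ (p - 1) *
        MvPolynomial.eval y (MvPolynomial.homogeneousComponent q P) =
      ∑ j, ((γ j : K) * (c * y j ^ p) ^ (γ j - 1) *
          (MvPolynomial.eval (fun _ => (1 : K)) (MvPolynomial.homogeneousComponent q P)
            * y j ^ q)) *
        ∏ i ∈ Finset.univ.erase j, (c * y i ^ p) ^ (γ i) := by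
  classical
  have hq1 : q ≤ p := hqp.le
  have hp1 : 1 ≤ p := by omega
  have hγdeg : γ.degree = p := by
    rw [Finsupp.degree, ← hγ]
    exact Finset.sum_subset (Finset.subset_univ _)
      (fun i _ hi => Finsupp.notMem_support_iff.mp hi)
  have hzero : ∀ k, q < k → k ≠ p → MvPolynomial.homogeneousComponent k P = 0 := by
    intro k hk hkp
    have hsplit : P = (P - MvPolynomial.homogeneousComponent p P)
        + MvPolynomial.homogeneousComponent p P := by ring
    rw [hsplit, map_add,
      MvPolynomial.homogeneousComponent_eq_zero _ _ (lt_of_le_of_lt (le_of_eq hq) hk),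
      MvPolynomial.homogeneousComponent_of_mem
        (hPp ▸ (MvPolynomial.mem_homogeneousSubmodule _ _).mpr
          (MvPolynomial.isHomogeneous_monomial _ hγdeg))]
    rw [if_neg hkp, add_zero]
  set a : ℕ → K := fun k => MvPolynomial.eval y (MvPolynomial.homogeneousComponent k P) with ha
  set b : ℕ → K :=
    fun k => MvPolynomial.eval (fun _ => (1 : K)) (MvPolynomial.homogeneousComponent k P) with hb
  have hbp : b p = c := by
    rw [hb]; show MvPolynomial.eval _ _ = c
    rw [hPp, MvPolynomial.eval_monomial]
    simp [Finsupp.prod]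
  show (p : K) * a p ^ (p - 1) * a q =
      ∑ j, ((γ j : K) * (c * y j ^ p) ^ (γ j - 1) * (b q * y j ^ q)) *
        ∏ i ∈ Finset.univ.erase j, (c * y i ^ p) ^ (γ i)
  set U : K[X] := ∑ k ∈ Finset.range (p + 1), Polynomial.C (a k) * Polynomial.X ^ k with hU
  set w : Fin n → K[X] := fun j =>
    ∑ k ∈ Finset.range (p + 1), Polynomial.C (b k * y j ^ k) * Polynomial.X ^ k with hw
  set L : K[X] := ∑ k ∈ Finset.range (p + 1), Polynomial.C (b k) * U ^ k with hL
  set R : K[X] := MvPolynomial.aeval w P with hR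
  have hEvalP : ∀ (z : Fin n → K) (t : K),
      MvPolynomial.eval (fun i => t * z i) P
        = ∑ k ∈ Finset.range (p + 1),
            t ^ k * MvPolynomial.eval z (MvPolynomial.homogeneousComponent k P) := by
    intro z t
    conv_lhs => rw [← MvPolynomial.sum_homogeneousComponent P]
    rw [hdeg, map_sum]
    exact Finset.sum_congr rfl fun k _ =>
      eval_homog_mul_left (MvPolynomial.homogeneousComponent_isHomogeneous k P) t z
  have hgen : ∀ f : ℕ → K, (∀ k, q < k → k < p → f k = 0) →
      Good p q 1 (f p) (f q)
        (∑ k ∈ Finset.range (p + 1), Polynomial.C (f k) * Polynomial.X ^ k) := by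
    intro f hf
    refine ⟨∑ k ∈ Finset.range (q + 1), Polynomial.C (f k) * Polynomial.X ^ k, ?_, ?_, ?_,
      fun h => absurd h one_ne_zero⟩
    · rw [Finset.sum_range_succ, Nat.mul_one]
      have hss : ∑ k ∈ Finset.range (q + 1), Polynomial.C (f k) * Polynomial.X ^ k
          = ∑ k ∈ Finset.range p, Polynomial.C (f k) * Polynomial.X ^ k := by
        refine Finset.sum_subset (fun k hk => ?_) (fun k hk hk2 => ?_)
        · rw [Finset.mem_range] at *; omega
        · rw [Finset.mem_range] at hk
          rw [Finset.mem_range, not_lt] at hk2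
          rw [hf k (by omega) hk, Polynomial.C_0, zero_mul]
      rw [hss]; ring
    · simp only [Nat.sub_self, Nat.mul_zero, Nat.zero_add]
      exact natDegree_sum_le_of_forall_le _ _ fun k hk =>
        (natDegree_C_mul_X_pow_le _ _).trans (by rw [Finset.mem_range] at hk; omega)
    · simp only [Nat.sub_self, Nat.mul_zero, Nat.zero_add]
      rw [Polynomial.finset_sum_coeff,
        Finset.sum_eq_single_of_mem q (Finset.self_mem_range_succ q)
          (fun k _ hkq => by
            rw [Polynomial.coeff_C_mul, Polynomial.coeff_X_pow,
              if_neg (fun hh => hkq hh.symm), mul_zero]),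
        Polynomial.coeff_C_mul, Polynomial.coeff_X_pow, if_pos rfl, mul_one]
  have hUgood : Good p q 1 (a p) (a q) U :=
    hgen a fun k h1 h2 => by rw [ha]; show MvPolynomial.eval _ _ = 0; rw [hzero k h1 h2.ne]; simp
  have hwgood : ∀ j, Good p q 1 (c * y j ^ p) (b q * y j ^ q) (w j) := by
    intro j
    have hg := hgen (fun k => b k * y j ^ k) (fun k h1 h2 => by
      have hbk : b k = 0 := by
        rw [hb]; show MvPolynomial.eval _ _ = 0; rw [hzero k h1 h2.ne]; simp
      simp [hbk])
    rw [hbp] at hg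
    exact hg
  have hw_deg : ∀ j, (w j).natDegree ≤ p := fun j => by
    simpa using (hwgood j).natDegree_le hq1
  have hLR : L = R := by
    apply Polynomial.funext
    intro t
    have hconst : ∀ s : K, MvPolynomial.eval (fun _ => s : Fin n → K) P
        = ∑ k ∈ Finset.range (p + 1), s ^ k * b k := by
      intro s
      have h1 := hEvalP (fun _ => (1 : K)) s
      simpa [hb] using h1
    have hUev : U.eval t = MvPolynomial.eval (fun i => t * y i) P := by
      rw [hEvalP y t, hU, Polynomial.eval_finset_sum]
      exact Finset.sum_congr rfl fun k _ => by rw [ha]; simp; ring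
    have hLt : L.eval t
        = MvPolynomial.eval (fun _ => MvPolynomial.eval (fun i => t * y i) P : Fin n → K) P := by
      rw [hconst, hL, Polynomial.eval_finset_sum]
      refine Finset.sum_congr rfl fun k _ => ?_
      rw [Polynomial.eval_mul, Polynomial.eval_C, Polynomial.eval_pow, hUev]
      ring
    have hRt : R.eval t
        = MvPolynomial.eval (fun j => MvPolynomial.eval (fun _ => t * y j : Fin n → K) P) P := by
      rw [hR, eval_aeval_poly]
      have harg : (fun j => Polynomial.eval t (w j))
          = fun j => MvPolynomial.eval (fun _ => t * y j : Fin n → K) P := by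
        funext j
        have h2 : ∀ k, MvPolynomial.eval (fun _ => y j : Fin n → K)
            (MvPolynomial.homogeneousComponent k P) = y j ^ k * b k := by
          intro k
          have h3 := eval_homog_mul_left
            (MvPolynomial.homogeneousComponent_isHomogeneous k P) (y j) (fun _ => (1 : K))
          simpa [hb] using h3
        have h1 : MvPolynomial.eval (fun _ => t * y j : Fin n → K) P
            = ∑ k ∈ Finset.range (p + 1), t ^ k * (y j ^ k * b k) := by
          have h0 := hEvalP (fun _ => y j : Fin n → K) t
          simp only [h2] at h0
          simpa using h0
        simp only [hw]
        rw [Polynomial.eval_finset_sum]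
        simp only [Polynomial.eval_mul, Polynomial.eval_C, Polynomial.eval_pow,
          Polynomial.eval_X]
        rw [h1]
        exact Finset.sum_congr rfl fun k _ => by ring
      rw [harg]
    rw [hLt, hRt]
    exact hbi fun _ j' => t * y j'
  -- coefficient extraction at degree p*(p-1)+q
  have hprodgood := Good.prod hqp (s := (Finset.univ : Finset (Fin n)))
    (fun j _ => (hwgood j).pow hqp (γ j))
  rw [hγ] at hprodgood
  have hNL : L.coeff (p * (p - 1) + q) = c * ((p : K) * a p ^ (p - 1) * a q) := by
    rw [hL, Polynomial.finset_sum_coeff,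
      Finset.sum_eq_single_of_mem p (Finset.self_mem_range_succ p) (fun k hk hkp => ?_)]
    · rw [Polynomial.coeff_C_mul, Good.coeff_eq hqp hp1 (hUgood.pow hqp p), hbp]
    · rw [Finset.mem_range] at hk
      rcases le_or_gt k q with hkq | hkq
      · have hdeg' : (U ^ k).natDegree < p * (p - 1) + q := by
          have h1 : (U ^ k).natDegree ≤ k * (p * 1) :=
            natDegree_pow_le.trans (Nat.mul_le_mul_left _ (hUgood.natDegree_le hq1))
          have h2 : k * (p * 1) ≤ q * p := by
            rw [Nat.mul_one]; exact Nat.mul_le_mul_right _ hkq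
          have h3 := qp_lt hp hqp
          omega
        rw [Polynomial.coeff_C_mul, Polynomial.coeff_eq_zero_of_natDegree_lt hdeg', mul_zero]
      · have hbk : b k = 0 := by
          rw [hb]; show MvPolynomial.eval _ _ = 0
          rw [hzero k hkq (by omega)]; simp
        rw [Polynomial.coeff_C_mul, hbk, zero_mul]
  have hNR : R.coeff (p * (p - 1) + q)
      = c * ∑ j, ((γ j : K) * (c * y j ^ p) ^ (γ j - 1) * (b q * y j ^ q)) *
          ∏ i ∈ Finset.univ.erase j, (c * y i ^ p) ^ (γ i) := by
    have hsplit : P = (P - MvPolynomial.homogeneousComponent p P)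
        + MvPolynomial.homogeneousComponent p P := by ring
    rw [hR]
    conv_lhs => rw [hsplit]
    rw [map_add, Polynomial.coeff_add]
    have hlow : ((MvPolynomial.aeval w) (P - MvPolynomial.homogeneousComponent p P)).coeff
        (p * (p - 1) + q) = 0 := by
      apply Polynomial.coeff_eq_zero_of_natDegree_lt
      refine (natDegree_aeval_le w p hw_deg _).trans_lt ?_
      rw [hq]
      exact qp_lt hp hqp
    rw [hlow, zero_add, hPp, MvPolynomial.aeval_monomial, Finsupp.prod_pow]
    rw [show (algebraMap K K[X]) c = Polynomial.C c from rfl, Polynomial.coeff_C_mul]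
    rw [Good.coeff_eq hqp hp1 hprodgood]
  have hkey : c * ((p : K) * a p ^ (p - 1) * a q)
      = c * ∑ j, ((γ j : K) * (c * y j ^ p) ^ (γ j - 1) * (b q * y j ^ q)) *
          ∏ i ∈ Finset.univ.erase j, (c * y i ^ p) ^ (γ i) := by
    rw [← hNL, ← hNR, hLR]
  exact mul_left_cancel₀ hc hkey

end BisymProof

/-- The explicit form of `P_q` in terms of `P_p` (after clearing denominators):
`c·p·P_q(x)·∏_j x_j^{p−q} = P_q(1)·P_p(x)·Σ_j γ_j·∏_{i ≠ j} x_i^{p−q}`. -/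
theorem bisym_Pq_explicit_form
    {K : Type*} [Field K] [CharZero K] {n p q : ℕ}
    (P : MvPolynomial (Fin n) K)
    (hbi : Bisym fun x : Fin n → K => MvPolynomial.eval x P)
    (hdeg : P.totalDegree = p) (hp : 2 ≤ p)
    (c : K) (hc : c ≠ 0) (γ : Fin n →₀ ℕ) (hγ : ∑ i, γ i = p)
    (hPp : MvPolynomial.homogeneousComponent p P = MvPolynomial.monomial γ c)
    (hne : P ≠ MvPolynomial.homogeneousComponent p P)
    (hq : (P - MvPolynomial.homogeneousComponent p P).totalDegree = q) (hqp : q < p) :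
    ∀ x : Fin n → K,
      c * (p : K) * MvPolynomial.eval x (MvPolynomial.homogeneousComponent q P) *
          ∏ j, x j ^ (p - q) =
        MvPolynomial.eval (fun _ => (1 : K)) (MvPolynomial.homogeneousComponent q P) *
          MvPolynomial.eval x (MvPolynomial.homogeneousComponent p P) *
          ∑ j, (γ j : K) * ∏ i ∈ Finset.univ.erase j, x i ^ (p - q) := by
  classical
  intro x
  set bq := MvPolynomial.eval (fun _ => (1 : K)) (MvPolynomial.homogeneousComponent q P)
    with hbq
  have main : MvPolynomial.eval x
        (MvPolynomial.C (c * (p : K)) * MvPolynomial.homogeneousComponent q P *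
          ∏ j, MvPolynomial.X j ^ (p - q))
      = MvPolynomial.eval x
        (MvPolynomial.C bq * MvPolynomial.homogeneousComponent p P *
          ∑ j, MvPolynomial.C ((γ j : K)) *
            ∏ i ∈ Finset.univ.erase j, MvPolynomial.X i ^ (p - q)) := by
    apply BisymProof.eval_eq_of_eval_nonzero_eq (fun y hy => ?_) x
    simp only [map_mul, map_sum, map_prod, map_pow, MvPolynomial.eval_C, MvPolynomial.eval_X]
    have hD := BisymProof.keyD P hbi hdeg hp c hc γ hγ hPp hq hqp y
    rw [← hbq] at hD
    set m := MvPolynomial.eval y (MvPolynomial.homogeneousComponent p P) with hm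
    have hmval : m = c * ∏ i, y i ^ γ i := by
      rw [hm, hPp, MvPolynomial.eval_monomial, Finsupp.prod_pow]
    have hm0 : m ≠ 0 := by
      rw [hmval]
      exact mul_ne_zero hc (Finset.prod_ne_zero_iff.mpr fun i _ => pow_ne_zero _ (hy i))
    apply mul_right_cancel₀ (pow_ne_zero (p - 1) hm0)
    have hmp : m ^ (p - 1) * m = ∏ i, (c * y i ^ p) ^ (γ i) := by
      have h1 : m ^ (p - 1) * m = m ^ p := by
        rw [← pow_succ]; congr 1; omega
      have h2 : ∏ i, (c * y i ^ p) ^ (γ i) = (∏ i, c ^ γ i) * ∏ i, (y i ^ γ i) ^ p := by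
        rw [← Finset.prod_mul_distrib]
        exact Finset.prod_congr rfl fun i _ => by
          rw [mul_pow, ← pow_mul, ← pow_mul, Nat.mul_comm (γ i) p]
      rw [h1, hmval, mul_pow, h2, Finset.prod_pow_eq_pow_sum, hγ, Finset.prod_pow]
    have hsum : c * (∑ j, ((γ j : K) * (c * y j ^ p) ^ (γ j - 1) * (bq * y j ^ q)) *
            ∏ i ∈ Finset.univ.erase j, (c * y i ^ p) ^ (γ i)) * (∏ j, y j ^ (p - q))
        = bq * (∏ i, (c * y i ^ p) ^ (γ i)) *
            ∑ j, (γ j : K) * ∏ i ∈ Finset.univ.erase j, y i ^ (p - q) := by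
      rw [Finset.mul_sum, Finset.sum_mul, Finset.mul_sum]
      refine Finset.sum_congr rfl fun j _ => ?_
      rcases Nat.eq_zero_or_pos (γ j) with hγj | hγj
      · simp [hγj]
      · obtain ⟨g, hγj⟩ : ∃ g, γ j = g + 1 := ⟨γ j - 1, by omega⟩
        have hpe : (∏ i, y i ^ (p - q))
            = y j ^ (p - q) * ∏ i ∈ Finset.univ.erase j, y i ^ (p - q) :=
          (Finset.mul_prod_erase _ _ (Finset.mem_univ j)).symm
        have hpe2 : (∏ i, (c * y i ^ p) ^ (γ i))
            = (c * y j ^ p) ^ (γ j) * ∏ i ∈ Finset.univ.erase j, (c * y i ^ p) ^ (γ i) :=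
          (Finset.mul_prod_erase _ _ (Finset.mem_univ j)).symm
        have hyq : y j ^ q * y j ^ (p - q) = y j ^ p := by
          rw [← pow_add]; congr 1; omega
        rw [hpe, hpe2, hγj, Nat.add_sub_cancel]
        linear_combination (c * ((g + 1 : ℕ) : K) * (c * y j ^ p) ^ g * bq *
          (∏ i ∈ Finset.univ.erase j, (c * y i ^ p) ^ (γ i)) *
          (∏ i ∈ Finset.univ.erase j, y i ^ (p - q))) * hyq
    calc c * (p : K) * MvPolynomial.eval y (MvPolynomial.homogeneousComponent q P) *
          (∏ j, y j ^ (p - q)) * m ^ (p - 1)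
        = c * ((p : K) * m ^ (p - 1) *
            MvPolynomial.eval y (MvPolynomial.homogeneousComponent q P)) *
            (∏ j, y j ^ (p - q)) := by ring
      _ = c * (∑ j, ((γ j : K) * (c * y j ^ p) ^ (γ j - 1) * (bq * y j ^ q)) *
            ∏ i ∈ Finset.univ.erase j, (c * y i ^ p) ^ (γ i)) * (∏ j, y j ^ (p - q)) := by
          rw [hD]
      _ = bq * (∏ i, (c * y i ^ p) ^ (γ i)) *
            ∑ j, (γ j : K) * ∏ i ∈ Finset.univ.erase j, y i ^ (p - q) := hsum
      _ = bq * m * (∑ j, (γ j : K) * ∏ i ∈ Finset.univ.erase j, y i ^ (p - q)) * m ^ (p - 1) := by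
          rw [← hmp]; ring
  simp only [map_mul, map_sum, map_prod, map_pow, MvPolynomial.eval_C,
    MvPolynomial.eval_X] at main
  linear_combination main
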